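/- For β = λξ̄/(1+ξξ̄)², the extrinsic curvature of the sphere R = R₀ satisfies κ = ρ² - |σ|² = [2(1+ξξ̄)² + λ(1+3|ξ|²cos2θ)][2(1+ξξ̄)² - λ(1-3|ξ|²cos2θ)] / (R₀²[(1+ξξ̄)⁴ - λ²ξξ̄]), and κ > 0 for all ξ whenever 0 < λ < 1; hence the sphere is strictly convex. -/

import Mathlib

/-- For `β = λξ̄/(1+ξξ̄)²`, with second fundamental form components
`σ = λ/(R₀√((1+ξξ̄)⁴-λ²ξξ̄))` and
`ρ = -(2(1+ξξ̄)² + 3λ|ξ|²cos2θ)/(R₀√((1+ξξ̄)⁴-λ²ξξ̄))` (where `ξ = |ξ|e^{iθ}`,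
so `|ξ|²cos2θ = Re(ξ²)`), the extrinsic curvature of the sphere `R = R₀`
satisfies
`κ = ρ² - |σ|² = [2(1+ξξ̄)² + λ(1+3|ξ|²cos2θ)][2(1+ξξ̄)² - λ(1-3|ξ|²cos2θ)]
  / (R₀²[(1+ξξ̄)⁴ - λ²ξξ̄])`,
and `κ > 0` for all `ξ` whenever `0 < λ < 1`; hence the sphere is strictly
convex. -/
theorem sphere_strictly_convex (lam R₀ : ℝ) (hlam0 : 0 < lam) (hlam1 : lam < 1)
    (hR₀ : 0 < R₀) (ξ : ℂ) :
    let x : ℝ := Complex.normSq ξ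
    let c : ℝ := (ξ ^ 2).re
    let σ : ℝ := lam / (R₀ * Real.sqrt ((1 + x) ^ 4 - lam ^ 2 * x))
    let ρ : ℝ := -(2 * (1 + x) ^ 2 + 3 * lam * c) /
      (R₀ * Real.sqrt ((1 + x) ^ 4 - lam ^ 2 * x))
    ρ ^ 2 - σ ^ 2
        = (2 * (1 + x) ^ 2 + lam * (1 + 3 * c)) * (2 * (1 + x) ^ 2 - lam * (1 - 3 * c))
            / (R₀ ^ 2 * ((1 + x) ^ 4 - lam ^ 2 * x)) ∧
    0 < ρ ^ 2 - σ ^ 2 := by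
  intro x c σ ρ
  have hx : 0 ≤ x := Complex.normSq_nonneg ξ
  have hc : |c| ≤ x := by
    calc |c| ≤ ‖ξ ^ 2‖ := Complex.abs_re_le_norm _
    _ = x := by rw [norm_pow, Complex.sq_norm]
  have hc1 : c ≤ x := (abs_le.mp hc).2
  have hc2 : -x ≤ c := (abs_le.mp hc).1
  have hl2 : lam ^ 2 * x ≤ x := mul_le_of_le_one_left hx (by nlinarith)
  have hD : 0 < (1 + x) ^ 4 - lam ^ 2 * x := by
    nlinarith [mul_nonneg hx hx, mul_nonneg (mul_nonneg hx hx) hx,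
      mul_nonneg (mul_nonneg hx hx) (mul_nonneg hx hx)]
  have hs : Real.sqrt ((1 + x) ^ 4 - lam ^ 2 * x) ^ 2 = (1 + x) ^ 4 - lam ^ 2 * x :=
    Real.sq_sqrt hD.le
  have hs0 : 0 < Real.sqrt ((1 + x) ^ 4 - lam ^ 2 * x) := Real.sqrt_pos.mpr hD
  have key : ρ ^ 2 - σ ^ 2
      = (2 * (1 + x) ^ 2 + lam * (1 + 3 * c)) * (2 * (1 + x) ^ 2 - lam * (1 - 3 * c))
          / (R₀ ^ 2 * ((1 + x) ^ 4 - lam ^ 2 * x)) := by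
    show (-(2 * (1 + x) ^ 2 + 3 * lam * c) /
      (R₀ * Real.sqrt ((1 + x) ^ 4 - lam ^ 2 * x))) ^ 2 -
      (lam / (R₀ * Real.sqrt ((1 + x) ^ 4 - lam ^ 2 * x))) ^ 2 = _
    rw [div_pow, div_pow, mul_pow, hs, div_sub_div_same]
    rw [div_eq_div_iff (by positivity) (by positivity)]
    ring
  refine ⟨key, key ▸ div_pos (mul_pos ?_ ?_) (by positivity)⟩
  · nlinarith
  · nlinarith
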